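/- The balanced hypercube BH_n (n ≥ 1) is Hamiltonian laceable: for every black vertex u and every white vertex v, there exists a Hamiltonian path of BH_n from u to v. -/

import Mathlib

open SimpleGraph

/-- One step of the balanced-hypercube adjacency relation. -/
def bhRel (n : ℕ) (u v : Fin n → ZMod 4) : Prop :=
  ∃ (hn : 0 < n) (s : ZMod 4), (s = 1 ∨ s = -1) ∧
    (v = Function.update u ⟨0, hn⟩ (u ⟨0, hn⟩ + s) ∨
      ∃ i : Fin n, i ≠ ⟨0, hn⟩ ∧
        v = Function.update (Function.update u ⟨0, hn⟩ (u ⟨0, hn⟩ + s)) i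
              (u i + (if Even (u ⟨0, hn⟩).val then 1 else -1)))

/-- The balanced hypercube `BH n` on vertex set `{0,1,2,3}^n`. -/
def BH (n : ℕ) : SimpleGraph (Fin n → ZMod 4) :=
  SimpleGraph.fromRel (bhRel n)

/-- A vertex is white if its inner index is even. -/
def IsWhite {n : ℕ} (hn : 0 < n) (u : Fin n → ZMod 4) : Prop :=
  Even (u ⟨0, hn⟩).val

/-- A vertex is black if its inner index is odd. -/
def IsBlack {n : ℕ} (hn : 0 < n) (u : Fin n → ZMod 4) : Prop :=
  Odd (u ⟨0, hn⟩).val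

/-! ### Infrastructure -/

abbrev BHV (n : ℕ) := Fin n → ZMod 4

lemma parity_flip : ∀ x s : ZMod 4, (s = 1 ∨ s = -1) →
    (Even ((x+s).val) ↔ ¬ Even (x.val)) := by decide

lemma parity_two : ∀ x : ZMod 4, Even ((x+2).val) ↔ Even (x.val) := by decide

lemma bhRel_zero {n : ℕ} (hn : 0 < n) {a b : BHV n} (h : bhRel n a b) :
    ∃ s : ZMod 4, (s = 1 ∨ s = -1) ∧ b ⟨0, hn⟩ = a ⟨0, hn⟩ + s := by
  obtain ⟨hn', s, hs, hcase⟩ := h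
  refine ⟨s, hs, ?_⟩
  rcases hcase with rfl | ⟨i, hi, rfl⟩
  · simp
  · rw [Function.update_apply]
    rw [if_neg (by simpa using (Ne.symm hi))]
    simp

lemma adj_flip {n : ℕ} (hn : 0 < n) {a b : BHV n} (h : (BH n).Adj a b) :
    (Even ((a ⟨0,hn⟩).val) ↔ ¬ Even ((b ⟨0,hn⟩).val)) := by
  rcases h.2 with h' | h'
  · obtain ⟨s, hs, hb⟩ := bhRel_zero hn h'
    rw [hb]
    have := parity_flip (a ⟨0,hn⟩) s hs
    tauto
  · obtain ⟨s, hs, hb⟩ := bhRel_zero hn h'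
    rw [hb]
    have := parity_flip (b ⟨0,hn⟩) s hs
    tauto

lemma adj_black_white {n : ℕ} (hn : 0 < n) {a b : BHV n} (h : (BH n).Adj a b)
    (ha : IsBlack hn a) : IsWhite hn b := by
  have := adj_flip hn h
  unfold IsBlack at ha
  unfold IsWhite
  rw [← Nat.not_even_iff_odd] at ha
  tauto

lemma adj_white_black {n : ℕ} (hn : 0 < n) {a b : BHV n} (h : (BH n).Adj a b)
    (ha : IsWhite hn a) : IsBlack hn b := by
  have := adj_flip hn h
  unfold IsWhite at ha
  unfold IsBlack
  rw [← Nat.not_even_iff_odd]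
  tauto

lemma black_white_ne {n : ℕ} (hn : 0 < n) {a b : BHV n} (ha : IsBlack hn a)
    (hb : IsWhite hn b) : a ≠ b := by
  rintro rfl
  rw [IsBlack, ← Nat.not_even_iff_odd] at ha
  exact ha hb

lemma snoc_update {m : ℕ} (a : BHV m) (j x : ZMod 4) (i : Fin m) :
    (Fin.snoc (Function.update a i x) j : BHV (m+1)) = Function.update (Fin.snoc a j) i.castSucc x := by
  funext k
  induction k using Fin.lastCases with
  | last =>
    rw [Fin.snoc_last, Function.update_apply, if_neg (by simp [Fin.ext_iff]; omega)]
    rw [Fin.snoc_last]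
  | cast k =>
    rw [Fin.snoc_castSucc, Function.update_apply, Function.update_apply]
    by_cases hk : k = i
    · subst hk; simp
    · rw [if_neg hk, if_neg (by simpa using hk), Fin.snoc_castSucc]

lemma update_snoc_last {m : ℕ} (a : BHV m) (j x : ZMod 4) :
    Function.update (Fin.snoc a j : BHV (m+1)) (Fin.last m) x = Fin.snoc a x := by
  funext k
  induction k using Fin.lastCases with
  | last => simp
  | cast k => rw [Function.update_apply, if_neg (by simp [Fin.ext_iff]; omega), Fin.snoc_castSucc, Fin.snoc_castSucc]

lemma snoc_zero {m : ℕ} (hm : 0 < m) (a : BHV m) (j : ZMod 4) :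
    (Fin.snoc a j : BHV (m+1)) ⟨0, Nat.succ_pos m⟩ = a ⟨0, hm⟩ := by
  have : (⟨0, Nat.succ_pos m⟩ : Fin (m+1)) = Fin.castSucc ⟨0, hm⟩ := rfl
  rw [this, Fin.snoc_castSucc]

lemma snoc_inj {m : ℕ} (j : ZMod 4) :
    Function.Injective (fun a : BHV m => (Fin.snoc a j : BHV (m+1))) := by
  intro a b hab
  have := congrArg Fin.init hab
  simpa using this

lemma adj_cross {m : ℕ} (hm : 0 < m) (a : BHV m) (j s : ZMod 4) (hs : s = 1 ∨ s = -1) :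
    (BH (m+1)).Adj (Fin.snoc a j)
      (Fin.snoc (Function.update a ⟨0,hm⟩ (a ⟨0,hm⟩ + s))
        (j + if Even ((a ⟨0,hm⟩).val) then 1 else -1)) := by
  constructor
  · intro hEq
    have h0 := congrFun hEq (Fin.castSucc ⟨0, hm⟩)
    rw [Fin.snoc_castSucc, Fin.snoc_castSucc, Function.update_self] at h0
    have h1 : s = 0 := (left_eq_add).mp h0
    rcases hs with rfl | rfl <;> exact absurd h1 (by decide)
  · left
    refine ⟨Nat.succ_pos m, s, hs, Or.inr ⟨Fin.last m, by simp [Fin.ext_iff]; omega, ?_⟩⟩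
    have h0 : (Fin.snoc a j : BHV (m+1)) ⟨0, Nat.succ_pos m⟩ = a ⟨0, hm⟩ := snoc_zero hm a j
    rw [h0]
    have hcast : (⟨0, Nat.succ_pos m⟩ : Fin (m+1)) = Fin.castSucc ⟨0, hm⟩ := rfl
    rw [hcast, ← snoc_update, update_snoc_last, Fin.snoc_last]

lemma rel_snoc {m : ℕ} (hm : 0 < m) {a b : BHV m} (j : ZMod 4) (h : bhRel m a b) :
    bhRel (m+1) (Fin.snoc a j) (Fin.snoc b j) := by
  obtain ⟨hm', s, hs, hcase⟩ := h
  have hmm : (⟨0, hm'⟩ : Fin m) = ⟨0, hm⟩ := rfl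
  rw [hmm] at hcase
  refine ⟨Nat.succ_pos m, s, hs, ?_⟩
  have hcast : (⟨0, Nat.succ_pos m⟩ : Fin (m+1)) = Fin.castSucc ⟨0, hm⟩ := rfl
  rcases hcase with rfl | ⟨i, hi, rfl⟩
  · left
    rw [hcast]
    simp only [Fin.snoc_castSucc, ← snoc_update]
  · right
    have hine : Fin.castSucc i ≠ (⟨0, Nat.succ_pos m⟩ : Fin (m+1)) := by
      rw [hcast]
      exact fun h' => hi (Fin.castSucc_injective m h')
    refine ⟨Fin.castSucc i, hine, ?_⟩
    rw [hcast]
    simp only [Fin.snoc_castSucc, ← snoc_update]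

def homSnoc (m : ℕ) (hm : 0 < m) (j : ZMod 4) : BH m →g BH (m+1) where
  toFun a := Fin.snoc a j
  map_rel' := by
    intro a b hab
    obtain ⟨hne, hr⟩ := hab
    refine ⟨fun hEq => hne (snoc_inj j hEq), ?_⟩
    rcases hr with h | h
    · exact Or.inl (rel_snoc hm j h)
    · exact Or.inr (rel_snoc hm j h)

lemma walk_split {α : Type*} [DecidableEq α] {G : SimpleGraph α} {g h : α} (p : G.Walk g h)
    (m₀ : α) (hmem : m₀ ∈ p.support) (hne : m₀ ≠ g) :
    ∃ (x : α) (q1 : G.Walk g x) (q2 : G.Walk m₀ h), G.Adj x m₀ ∧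
      p.support = q1.support ++ q2.support := by
  set p1 := p.takeUntil m₀ hmem with hp1
  set p2 := p.dropUntil m₀ hmem with hp2
  have hnotnil : ¬ p1.reverse.Nil := Walk.not_nil_of_ne (Ne.symm (fun hEq => hne hEq.symm))
  rw [Walk.not_nil_iff] at hnotnil
  obtain ⟨x, hadj, q, hq⟩ := hnotnil
  refine ⟨x, q.reverse, p2, hadj.symm, ?_⟩
  have hsup1 : p1.support = q.reverse.support ++ [m₀] := by
    have : p1.support = p1.reverse.support.reverse := by
      rw [Walk.support_reverse, List.reverse_reverse]
    rw [this, hq, Walk.support_cons, List.reverse_cons, Walk.support_reverse]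
  calc p.support = (p1.append p2).support := by rw [Walk.take_spec]
    _ = p1.support ++ p2.support.tail := Walk.support_append _ _
    _ = q.reverse.support ++ [m₀] ++ p2.support.tail := by rw [hsup1]
    _ = q.reverse.support ++ (m₀ :: p2.support.tail) := by simp
    _ = q.reverse.support ++ p2.support := by rw [← Walk.support_eq_cons]

/-- mapping a walk into a layer of `BH (m+1)` -/
def mapW {m : ℕ} (hm : 0 < m) (j : ZMod 4) {a b : BHV m} (p : (BH m).Walk a b) :
    (BH (m+1)).Walk (Fin.snoc a j) (Fin.snoc b j) :=
  (p.map (homSnoc m hm j)).copy rfl rfl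

lemma mapW_support {m : ℕ} (hm : 0 < m) (j : ZMod 4) {a b : BHV m} (p : (BH m).Walk a b) :
    (mapW hm j p).support = p.support.map (fun a => (Fin.snoc a j : BHV (m+1))) := by
  show (p.map (homSnoc m hm j)).support = _
  rw [Walk.support_map]
  rfl

def joinW {α : Type*} {G : SimpleGraph α} {a b c d : α} (p : G.Walk a b) (h : G.Adj b c)
    (q : G.Walk c d) : G.Walk a d :=
  p.append (Walk.cons h q)

lemma joinW_support {α : Type*} {G : SimpleGraph α} {a b c d : α} (p : G.Walk a b)
    (h : G.Adj b c) (q : G.Walk c d) : (joinW p h q).support = p.support ++ q.support := by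
  rw [joinW, Walk.support_append, Walk.support_cons, List.tail_cons]

lemma count_map_snoc {m : ℕ} (w : BHV (m+1)) (l : List (BHV m)) (j : ZMod 4) :
    (l.map (fun a => (Fin.snoc a j : BHV (m+1)))).count w
      = if w (Fin.last m) = j then l.count (Fin.init w) else 0 := by
  split_ifs with h
  · have hw : w = Fin.snoc (Fin.init w) j := by
      conv_lhs => rw [← Fin.snoc_init_self w]
      rw [h]
    conv_lhs => rw [hw]
    exact List.count_map_of_injective l _ (snoc_inj j) _
  · rw [List.count_eq_zero]
    intro hmem
    obtain ⟨a, _, rfl⟩ := List.mem_map.mp hmem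
    exact h (by simp)

/-- the neighbour with inner index shifted by `s` -/
def nbr {m : ℕ} (hm : 0 < m) (a : BHV m) (s : ZMod 4) : BHV m :=
  Function.update a ⟨0,hm⟩ (a ⟨0,hm⟩ + s)

lemma nbr_zero {m : ℕ} (hm : 0 < m) (a : BHV m) (s : ZMod 4) :
    nbr hm a s ⟨0,hm⟩ = a ⟨0,hm⟩ + s := Function.update_self _ _ _

lemma nbr_white_black {m : ℕ} (hm : 0 < m) {a : BHV m} (ha : IsWhite hm a)
    {s : ZMod 4} (hs : s = 1 ∨ s = -1) : IsBlack hm (nbr hm a s) := by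
  rw [IsBlack, ← Nat.not_even_iff_odd, nbr_zero]
  rw [parity_flip _ s hs]
  exact fun h => h ha

lemma nbr_black_white {m : ℕ} (hm : 0 < m) {a : BHV m} (ha : IsBlack hm a)
    {s : ZMod 4} (hs : s = 1 ∨ s = -1) : IsWhite hm (nbr hm a s) := by
  rw [IsWhite, nbr_zero, parity_flip _ s hs]
  rw [IsBlack, ← Nat.not_even_iff_odd] at ha
  exact ha

lemma nbr2_black {m : ℕ} (hm : 0 < m) {a : BHV m} (ha : IsBlack hm a) :
    IsBlack hm (nbr hm a 2) := by
  rw [IsBlack, ← Nat.not_even_iff_odd, nbr_zero, parity_two]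
  rw [IsBlack, ← Nat.not_even_iff_odd] at ha
  exact ha

lemma nbr2_ne {m : ℕ} (hm : 0 < m) (a : BHV m) : nbr hm a 2 ≠ a := by
  intro h
  have := congrFun h ⟨0,hm⟩
  rw [nbr_zero] at this
  exact (by decide : ∀ x : ZMod 4, x + 2 ≠ x) _ this

lemma nbr_ne_nbr {m : ℕ} (hm : 0 < m) (a : BHV m) : nbr hm a 1 ≠ nbr hm a (-1) := by
  intro h
  have := congrFun h ⟨0,hm⟩
  rw [nbr_zero, nbr_zero] at this
  exact (by decide : ∀ x : ZMod 4, x + 1 ≠ x + -1) _ this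

/-- the forward cross edge from a white vertex -/
lemma adj_cross_white {m : ℕ} (hm : 0 < m) {a : BHV m} (ha : IsWhite hm a)
    (j : ZMod 4) {s : ZMod 4} (hs : s = 1 ∨ s = -1) :
    (BH (m+1)).Adj (Fin.snoc a j) (Fin.snoc (nbr hm a s) (j + 1)) := by
  have := adj_cross hm a j s hs
  have ha' : Even ((a ⟨0,hm⟩).val) := ha
  rwa [if_pos ha'] at this

/-- the backward cross edge from a black vertex -/
lemma adj_cross_black {m : ℕ} (hm : 0 < m) {a : BHV m} (ha : IsBlack hm a)
    (j : ZMod 4) {s : ZMod 4} (hs : s = 1 ∨ s = -1) :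
    (BH (m+1)).Adj (Fin.snoc a j) (Fin.snoc (nbr hm a s) (j + 3)) := by
  have := adj_cross hm a j s hs
  rw [IsBlack, ← Nat.not_even_iff_odd] at ha
  rw [if_neg ha] at this
  rwa [(by decide : ∀ c : ZMod 4, c + -1 = c + 3) j] at this

def whV (m : ℕ) : BHV m := fun _ => 0

lemma whV_white {m : ℕ} (hm : 0 < m) : IsWhite hm (whV m) := by
  rw [IsWhite]
  have h0 : (whV m) ⟨0,hm⟩ = 0 := rfl
  rw [h0]
  decide

lemma shift_ne {c k l : ZMod 4} (h : k ≠ l) : c + k ≠ c + l := fun e => h (add_left_cancel e)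

lemma shift_ne0 {c k : ZMod 4} (h : k ≠ 0) : c + k ≠ c := fun e => h ((add_eq_left).mp e)

lemma zmod4_cases (j c : ZMod 4) : j = c ∨ j = c + 1 ∨ j = c + 2 ∨ j = c + 3 := by
  revert j c; decide

lemma ham_count {α : Type*} [DecidableEq α] {G : SimpleGraph α} {a b : α} {p : G.Walk a b}
    (hp : p.IsHamiltonian) (x : α) : p.support.count x = 1 := hp x

lemma ham_mem {α : Type*} [DecidableEq α] {G : SimpleGraph α} {a b : α} {p : G.Walk a b}
    (hp : p.IsHamiltonian) (x : α) : x ∈ p.support :=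
  List.count_pos_iff.mp (by rw [hp x]; norm_num)

/-! ### The inductive step -/

lemma lace_step (m : ℕ) (hm : 0 < m)
    (IH : ∀ u v : BHV m, IsBlack hm u → IsWhite hm v →
      ∃ p : (BH m).Walk u v, p.IsHamiltonian) :
    ∀ u v : BHV (m+1), IsBlack (Nat.succ_pos m) u → IsWhite (Nat.succ_pos m) v →
      ∃ p : (BH (m+1)).Walk u v, p.IsHamiltonian := by
  intro u v hu hv
  set au := Fin.init u with hau
  set av := Fin.init v with hav
  set j0 := u (Fin.last m) with hj0
  set jv := v (Fin.last m) with hjv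
  have hub : IsBlack hm au := hu
  have hvw : IsWhite hm av := hv
  have hsnu : Fin.snoc au j0 = u := Fin.snoc_init_self u
  have hsnv : Fin.snoc av jv = v := Fin.snoc_init_self v
  have hwh := whV_white (m := m) hm
  rcases zmod4_cases jv j0 with hδ | hδ | hδ | hδ
  · -- jv = j0 : split the layer of u,v and detour through the other three layers
    obtain ⟨P0, h0⟩ := IH au av hub hvw
    have hm0b : IsBlack hm (nbr hm au 2) := nbr2_black hm hub
    obtain ⟨x, q1, q2, hxadj, hsup⟩ :=
      walk_split P0 (nbr hm au 2) (ham_mem h0 _) (nbr2_ne hm au)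
    have hxw : IsWhite hm x := adj_black_white hm hxadj.symm hm0b
    have hb1 : IsBlack hm (nbr hm x 1) := nbr_white_black hm hxw (Or.inl rfl)
    obtain ⟨P1, h1⟩ := IH (nbr hm x 1) (whV m) hb1 hwh
    have hbw : IsBlack hm (nbr hm (whV m) 1) := nbr_white_black hm hwh (Or.inl rfl)
    obtain ⟨P2, h2⟩ := IH (nbr hm (whV m) 1) (whV m) hbw hwh
    have hw3 : IsWhite hm (nbr hm (nbr hm au 2) 1) := nbr_black_white hm hm0b (Or.inl rfl)
    obtain ⟨P3, h3⟩ := IH (nbr hm (whV m) 1) (nbr hm (nbr hm au 2) 1) hbw hw3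
    have eA : (BH (m+1)).Adj (Fin.snoc x j0) (Fin.snoc (nbr hm x 1) (j0+1)) :=
      adj_cross_white hm hxw j0 (Or.inl rfl)
    have eB : (BH (m+1)).Adj (Fin.snoc (whV m) (j0+1)) (Fin.snoc (nbr hm (whV m) 1) (j0+1+1)) :=
      adj_cross_white hm hwh (j0+1) (Or.inl rfl)
    rw [(by ring : j0 + 1 + 1 = j0 + 2)] at eB
    have eC : (BH (m+1)).Adj (Fin.snoc (whV m) (j0+2)) (Fin.snoc (nbr hm (whV m) 1) (j0+2+1)) :=
      adj_cross_white hm hwh (j0+2) (Or.inl rfl)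
    rw [(by ring : j0 + 2 + 1 = j0 + 3)] at eC
    have eD : (BH (m+1)).Adj (Fin.snoc (nbr hm (nbr hm au 2) 1) (j0+3)) (Fin.snoc (nbr hm au 2) j0) :=
      (adj_cross_black hm hm0b j0 (Or.inl rfl)).symm
    let W : (BH (m+1)).Walk (Fin.snoc au j0) (Fin.snoc av j0) :=
      joinW (mapW hm j0 q1) eA (joinW (mapW hm (j0+1) P1) eB
        (joinW (mapW hm (j0+2) P2) eC (joinW (mapW hm (j0+3) P3) eD (mapW hm j0 q2))))
    refine ⟨W.copy (by rw [hsnu]) (by rw [← hδ, hsnv]), ?_⟩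
    intro w
    rw [Walk.support_copy]
    show List.count w _ = 1
    rw [joinW_support, joinW_support, joinW_support, joinW_support,
      mapW_support, mapW_support, mapW_support, mapW_support, mapW_support,
      List.count_append, List.count_append, List.count_append, List.count_append,
      count_map_snoc, count_map_snoc, count_map_snoc, count_map_snoc, count_map_snoc]
    have hcnt : q1.support.count (Fin.init w) + q2.support.count (Fin.init w) = 1 := by
      rw [← List.count_append, ← hsup]
      exact ham_count h0 _
    rcases zmod4_cases (w (Fin.last m)) j0 with hw | hw | hw | hw <;> rw [hw]
    · rw [if_pos rfl, if_neg (shift_ne0 (by decide)).symm, if_neg (shift_ne0 (by decide)).symm,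
        if_neg (shift_ne0 (by decide)).symm, if_pos rfl]
      omega
    · rw [if_neg (shift_ne0 (by decide)), if_pos rfl, if_neg (shift_ne (by decide)),
        if_neg (shift_ne (by decide)), if_neg (shift_ne0 (by decide))]
      rw [ham_count h1]
    · rw [if_neg (shift_ne0 (by decide)), if_neg (shift_ne (by decide)), if_pos rfl,
        if_neg (shift_ne (by decide)), if_neg (shift_ne0 (by decide))]
      rw [ham_count h2]
    · rw [if_neg (shift_ne0 (by decide)), if_neg (shift_ne (by decide)),
        if_neg (shift_ne (by decide)), if_pos rfl, if_neg (shift_ne0 (by decide))]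
      rw [ham_count h3]
  · -- jv = j0 + 1
    obtain ⟨P0, h0⟩ := IH au (whV m) hub hwh
    have hcb : IsBlack hm (nbr hm au 2) := nbr2_black hm hub
    obtain ⟨a, q1, q2, hacadj, hsupP0⟩ :=
      walk_split P0 (nbr hm au 2) (ham_mem h0 _) (nbr2_ne hm au)
    have haw : IsWhite hm a := adj_black_white hm hacadj.symm hcb
    have hb1 : IsBlack hm (nbr hm a 1) := nbr_white_black hm haw (Or.inl rfl)
    obtain ⟨y1, hy1b, hy1ne, ey1⟩ : ∃ y1, IsBlack hm y1 ∧ y1 ≠ nbr hm a 1 ∧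
        (BH (m+1)).Adj (Fin.snoc (whV m) j0) (Fin.snoc y1 (j0+1)) := by
      by_cases hcase : nbr hm (whV m) 1 = nbr hm a 1
      · exact ⟨nbr hm (whV m) (-1), nbr_white_black hm hwh (Or.inr rfl),
          (by rw [← hcase]; exact (nbr_ne_nbr hm _).symm),
          adj_cross_white hm hwh j0 (Or.inr rfl)⟩
      · exact ⟨nbr hm (whV m) 1, nbr_white_black hm hwh (Or.inl rfl), hcase,
          adj_cross_white hm hwh j0 (Or.inl rfl)⟩
    obtain ⟨Q1, hQ1⟩ := IH (nbr hm a 1) av hb1 hvw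
    obtain ⟨x1, r1, r2, hx1adj, hsupQ1⟩ := walk_split Q1 y1 (ham_mem hQ1 y1) hy1ne
    have hx1w : IsWhite hm x1 := adj_black_white hm hx1adj.symm hy1b
    have hb2 : IsBlack hm (nbr hm x1 1) := nbr_white_black hm hx1w (Or.inl rfl)
    obtain ⟨P2, h2⟩ := IH (nbr hm x1 1) (whV m) hb2 hwh
    have hbw : IsBlack hm (nbr hm (whV m) 1) := nbr_white_black hm hwh (Or.inl rfl)
    have hw3w : IsWhite hm (nbr hm (nbr hm au 2) 1) := nbr_black_white hm hcb (Or.inl rfl)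
    obtain ⟨P3, h3⟩ := IH (nbr hm (whV m) 1) (nbr hm (nbr hm au 2) 1) hbw hw3w
    have e1 : (BH (m+1)).Adj (Fin.snoc a j0) (Fin.snoc (nbr hm a 1) (j0+1)) :=
      adj_cross_white hm haw j0 (Or.inl rfl)
    have e2 : (BH (m+1)).Adj (Fin.snoc x1 (j0+1)) (Fin.snoc (nbr hm x1 1) (j0+1+1)) :=
      adj_cross_white hm hx1w (j0+1) (Or.inl rfl)
    rw [(by ring : j0 + 1 + 1 = j0 + 2)] at e2
    have e3 : (BH (m+1)).Adj (Fin.snoc (whV m) (j0+2)) (Fin.snoc (nbr hm (whV m) 1) (j0+2+1)) :=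
      adj_cross_white hm hwh (j0+2) (Or.inl rfl)
    rw [(by ring : j0 + 2 + 1 = j0 + 3)] at e3
    have e4 : (BH (m+1)).Adj (Fin.snoc (nbr hm (nbr hm au 2) 1) (j0+3)) (Fin.snoc (nbr hm au 2) j0) :=
      (adj_cross_black hm hcb j0 (Or.inl rfl)).symm
    let W : (BH (m+1)).Walk (Fin.snoc au j0) (Fin.snoc av (j0+1)) :=
      joinW (mapW hm j0 q1) e1 (joinW (mapW hm (j0+1) r1) e2 (joinW (mapW hm (j0+2) P2) e3
        (joinW (mapW hm (j0+3) P3) e4 (joinW (mapW hm j0 q2) ey1 (mapW hm (j0+1) r2)))))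
    refine ⟨W.copy (by rw [hsnu]) (by rw [← hδ, hsnv]), ?_⟩
    intro w
    rw [Walk.support_copy]
    show List.count w _ = 1
    rw [joinW_support, joinW_support, joinW_support, joinW_support, joinW_support,
      mapW_support, mapW_support, mapW_support, mapW_support, mapW_support, mapW_support,
      List.count_append, List.count_append, List.count_append, List.count_append,
      List.count_append,
      count_map_snoc, count_map_snoc, count_map_snoc, count_map_snoc, count_map_snoc,
      count_map_snoc]
    have hcnt0 : q1.support.count (Fin.init w) + q2.support.count (Fin.init w) = 1 := by
      rw [← List.count_append, ← hsupP0]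
      exact ham_count h0 _
    have hcnt1 : r1.support.count (Fin.init w) + r2.support.count (Fin.init w) = 1 := by
      rw [← List.count_append, ← hsupQ1]
      exact ham_count hQ1 _
    rcases zmod4_cases (w (Fin.last m)) j0 with hw | hw | hw | hw <;> rw [hw]
    · rw [if_pos rfl, if_neg (shift_ne0 (by decide)).symm, if_neg (shift_ne0 (by decide)).symm,
        if_neg (shift_ne0 (by decide)).symm, if_pos rfl, if_neg (shift_ne0 (by decide)).symm]
      omega
    · rw [if_neg (shift_ne0 (by decide)), if_pos rfl, if_neg (shift_ne (by decide)),
        if_neg (shift_ne (by decide)), if_neg (shift_ne0 (by decide)), if_pos rfl]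
      omega
    · rw [if_neg (shift_ne0 (by decide)), if_neg (shift_ne (by decide)), if_pos rfl,
        if_neg (shift_ne (by decide)), if_neg (shift_ne0 (by decide)),
        if_neg (shift_ne (by decide))]
      rw [ham_count h2]
    · rw [if_neg (shift_ne0 (by decide)), if_neg (shift_ne (by decide)),
        if_neg (shift_ne (by decide)), if_pos rfl, if_neg (shift_ne0 (by decide)),
        if_neg (shift_ne (by decide))]
      rw [ham_count h3]
  · -- jv = j0 + 2
    obtain ⟨P0, h0⟩ := IH au (whV m) hub hwh
    obtain ⟨p0, q1, q2, hp0adj, hsupP0⟩ :=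
      walk_split P0 (whV m) (ham_mem h0 _) (black_white_ne hm hub hwh).symm
    have hp0b : IsBlack hm p0 := adj_white_black hm hp0adj.symm hwh
    have hw3w : IsWhite hm (nbr hm p0 1) := nbr_black_white hm hp0b (Or.inl rfl)
    have hg1b : IsBlack hm (nbr hm (whV m) 1) := nbr_white_black hm hwh (Or.inl rfl)
    have hm1b : IsBlack hm (nbr hm (whV m) (-1)) := nbr_white_black hm hwh (Or.inr rfl)
    obtain ⟨Q1, hQ1⟩ := IH (nbr hm (whV m) 1) (whV m) hg1b hwh
    obtain ⟨x1, r1, r2, hx1adj, hsupQ1⟩ :=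
      walk_split Q1 (nbr hm (whV m) (-1)) (ham_mem hQ1 _) (nbr_ne_nbr hm _).symm
    have hx1w : IsWhite hm x1 := adj_black_white hm hx1adj.symm hm1b
    have hrb2 : IsBlack hm (nbr hm x1 1) := nbr_white_black hm hx1w (Or.inl rfl)
    obtain ⟨Q2, hQ2⟩ := IH (nbr hm x1 1) av hrb2 hvw
    obtain ⟨m2, hm2b, hm2ne, em2⟩ : ∃ m2, IsBlack hm m2 ∧ m2 ≠ nbr hm x1 1 ∧
        (BH (m+1)).Adj (Fin.snoc (whV m) (j0+1)) (Fin.snoc m2 (j0+2)) := by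
      by_cases hcase : nbr hm (whV m) 1 = nbr hm x1 1
      · refine ⟨nbr hm (whV m) (-1), hm1b, (by rw [← hcase]; exact (nbr_ne_nbr hm _).symm), ?_⟩
        have := adj_cross_white hm hwh (j0+1) (Or.inr rfl)
        rwa [(by ring : j0 + 1 + 1 = j0 + 2)] at this
      · refine ⟨nbr hm (whV m) 1, hg1b, hcase, ?_⟩
        have := adj_cross_white hm hwh (j0+1) (Or.inl rfl)
        rwa [(by ring : j0 + 1 + 1 = j0 + 2)] at this
    obtain ⟨x2, s1, s2, hx2adj, hsupQ2⟩ := walk_split Q2 m2 (ham_mem hQ2 m2) hm2ne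
    have hx2w : IsWhite hm x2 := adj_black_white hm hx2adj.symm hm2b
    have hz3b : IsBlack hm (nbr hm x2 1) := nbr_white_black hm hx2w (Or.inl rfl)
    obtain ⟨P3, h3⟩ := IH (nbr hm x2 1) (nbr hm p0 1) hz3b hw3w
    have eA : (BH (m+1)).Adj (Fin.snoc p0 j0) (Fin.snoc (nbr hm p0 1) (j0+3)) :=
      adj_cross_black hm hp0b j0 (Or.inl rfl)
    have eB : (BH (m+1)).Adj (Fin.snoc (nbr hm x2 1) (j0+3)) (Fin.snoc x2 (j0+2)) := by
      have := adj_cross_white hm hx2w (j0+2) (Or.inl rfl)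
      rw [(by ring : j0 + 2 + 1 = j0 + 3)] at this
      exact this.symm
    have eC : (BH (m+1)).Adj (Fin.snoc (nbr hm x1 1) (j0+2)) (Fin.snoc x1 (j0+1)) := by
      have := adj_cross_white hm hx1w (j0+1) (Or.inl rfl)
      rw [(by ring : j0 + 1 + 1 = j0 + 2)] at this
      exact this.symm
    have eD : (BH (m+1)).Adj (Fin.snoc (nbr hm (whV m) 1) (j0+1)) (Fin.snoc (whV m) j0) :=
      (adj_cross_white hm hwh j0 (Or.inl rfl)).symm
    have eE : (BH (m+1)).Adj (Fin.snoc (whV m) j0) (Fin.snoc (nbr hm (whV m) (-1)) (j0+1)) :=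
      adj_cross_white hm hwh j0 (Or.inr rfl)
    let W : (BH (m+1)).Walk (Fin.snoc au j0) (Fin.snoc av (j0+2)) :=
      joinW (mapW hm j0 q1) eA (joinW (mapW hm (j0+3) P3).reverse eB
        (joinW (mapW hm (j0+2) s1).reverse eC (joinW (mapW hm (j0+1) r1).reverse eD
          (joinW (mapW hm j0 q2) eE (joinW (mapW hm (j0+1) r2) em2 (mapW hm (j0+2) s2))))))
    refine ⟨W.copy (by rw [hsnu]) (by rw [← hδ, hsnv]), ?_⟩
    intro w
    rw [Walk.support_copy]
    show List.count w _ = 1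
    rw [joinW_support, joinW_support, joinW_support, joinW_support, joinW_support,
      joinW_support,
      Walk.support_reverse, Walk.support_reverse, Walk.support_reverse,
      mapW_support, mapW_support, mapW_support, mapW_support, mapW_support, mapW_support,
      mapW_support,
      List.count_append, List.count_append, List.count_append, List.count_append,
      List.count_append, List.count_append,
      List.count_reverse, List.count_reverse, List.count_reverse,
      count_map_snoc, count_map_snoc, count_map_snoc, count_map_snoc, count_map_snoc,
      count_map_snoc, count_map_snoc]
    have hcnt0 : q1.support.count (Fin.init w) + q2.support.count (Fin.init w) = 1 := by
      rw [← List.count_append, ← hsupP0]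
      exact ham_count h0 _
    have hcnt1 : r1.support.count (Fin.init w) + r2.support.count (Fin.init w) = 1 := by
      rw [← List.count_append, ← hsupQ1]
      exact ham_count hQ1 _
    have hcnt2 : s1.support.count (Fin.init w) + s2.support.count (Fin.init w) = 1 := by
      rw [← List.count_append, ← hsupQ2]
      exact ham_count hQ2 _
    rcases zmod4_cases (w (Fin.last m)) j0 with hw | hw | hw | hw <;> rw [hw]
    · rw [if_pos rfl, if_neg (shift_ne0 (by decide)).symm, if_neg (shift_ne0 (by decide)).symm,
        if_neg (shift_ne0 (by decide)).symm, if_pos rfl, if_neg (shift_ne0 (by decide)).symm,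
        if_neg (shift_ne0 (by decide)).symm]
      omega
    · rw [if_neg (shift_ne0 (by decide)), if_neg (shift_ne (by decide)),
        if_neg (shift_ne (by decide)), if_pos rfl, if_neg (shift_ne0 (by decide)),
        if_pos rfl, if_neg (shift_ne (by decide))]
      omega
    · rw [if_neg (shift_ne0 (by decide)), if_neg (shift_ne (by decide)), if_pos rfl,
        if_neg (shift_ne (by decide)), if_neg (shift_ne0 (by decide)),
        if_neg (shift_ne (by decide)), if_pos rfl]
      omega
    · rw [if_neg (shift_ne0 (by decide)), if_pos rfl, if_neg (shift_ne (by decide)),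
        if_neg (shift_ne (by decide)), if_neg (shift_ne0 (by decide)),
        if_neg (shift_ne (by decide)), if_neg (shift_ne (by decide))]
      rw [ham_count h3]
  · -- jv = j0 + 3 : chain through the four layers
    obtain ⟨P0, h0⟩ := IH au (whV m) hub hwh
    set b1 := nbr hm (whV m) 1 with hb1def
    have hb1 : IsBlack hm b1 := nbr_white_black hm hwh (Or.inl rfl)
    obtain ⟨P1, h1⟩ := IH b1 (whV m) hb1 hwh
    obtain ⟨P3, h3⟩ := IH b1 av hb1 hvw
    have e01 : (BH (m+1)).Adj (Fin.snoc (whV m) j0) (Fin.snoc b1 (j0 + 1)) :=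
      adj_cross_white hm hwh j0 (Or.inl rfl)
    have e12 : (BH (m+1)).Adj (Fin.snoc (whV m) (j0+1)) (Fin.snoc b1 (j0 + 1 + 1)) :=
      adj_cross_white hm hwh (j0+1) (Or.inl rfl)
    have e23 : (BH (m+1)).Adj (Fin.snoc (whV m) (j0+2)) (Fin.snoc b1 (j0 + 2 + 1)) :=
      adj_cross_white hm hwh (j0+2) (Or.inl rfl)
    rw [(by ring : j0 + 1 + 1 = j0 + 2)] at e12
    rw [(by ring : j0 + 2 + 1 = j0 + 3)] at e23
    let W : (BH (m+1)).Walk (Fin.snoc au j0) (Fin.snoc av (j0+3)) :=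
      joinW (mapW hm j0 P0) e01 (joinW (mapW hm (j0+1) P1) e12
        (joinW (mapW hm (j0+2) P1) e23 (mapW hm (j0+3) P3)))
    refine ⟨W.copy (by rw [hsnu]) (by rw [← hδ, hsnv]), ?_⟩
    intro w
    rw [Walk.support_copy]
    show List.count w _ = 1
    rw [joinW_support, joinW_support, joinW_support,
      mapW_support, mapW_support, mapW_support, mapW_support,
      List.count_append, List.count_append, List.count_append,
      count_map_snoc, count_map_snoc, count_map_snoc, count_map_snoc]
    rcases zmod4_cases (w (Fin.last m)) j0 with hw | hw | hw | hw <;> rw [hw]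
    · rw [if_pos rfl, if_neg (shift_ne0 (by decide)).symm,
        if_neg (shift_ne0 (by decide)).symm, if_neg (shift_ne0 (by decide)).symm]
      rw [ham_count h0]
    · rw [if_neg (shift_ne0 (by decide)), if_pos rfl,
        if_neg (shift_ne (by decide)), if_neg (shift_ne (by decide))]
      rw [ham_count h1]
    · rw [if_neg (shift_ne0 (by decide)), if_neg (shift_ne (by decide)), if_pos rfl,
        if_neg (shift_ne (by decide))]
      rw [ham_count h1]
    · rw [if_neg (shift_ne0 (by decide)), if_neg (shift_ne (by decide)),
        if_neg (shift_ne (by decide)), if_pos rfl]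
      rw [ham_count h3]

/-! ### Base case `n = 1` -/

def c1 (x : ZMod 4) : BHV 1 := fun _ => x

lemma c1_inj : Function.Injective c1 := by
  intro a b h
  exact congrFun h ⟨0, Nat.one_pos⟩

lemma c1_eta (a : BHV 1) : a = c1 (a ⟨0, Nat.one_pos⟩) := by
  funext k
  have : k = ⟨0, Nat.one_pos⟩ := Subsingleton.elim _ _
  rw [this]
  rfl

lemma adj1 (x : ZMod 4) {s : ZMod 4} (hs : s = 1 ∨ s = -1) :
    (BH 1).Adj (c1 x) (c1 (x + s)) := by
  constructor
  · intro h
    have h0 := congrFun h ⟨0, Nat.one_pos⟩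
    have : s = 0 := (left_eq_add).mp h0
    rcases hs with rfl | rfl <;> exact absurd this (by decide)
  · left
    refine ⟨Nat.one_pos, s, hs, Or.inl ?_⟩
    funext k
    have hk : k = ⟨0, Nat.one_pos⟩ := Subsingleton.elim _ _
    rw [hk, Function.update_self]
    rfl

lemma count4a : ∀ t x : ZMod 4,
    List.count t [x, x + -1, x + -1 + -1, x + -1 + -1 + -1] = 1 := by decide

lemma count4b : ∀ t x : ZMod 4,
    List.count t [x, x + 1, x + 1 + 1, x + 1 + 1 + 1] = 1 := by decide

lemma lace_base : ∀ u v : BHV 1, IsBlack Nat.one_pos u → IsWhite Nat.one_pos v →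
    ∃ p : (BH 1).Walk u v, p.IsHamiltonian := by
  intro u v hu hv
  have hd : v ⟨0, Nat.one_pos⟩ = u ⟨0, Nat.one_pos⟩ + 1 ∨
      v ⟨0, Nat.one_pos⟩ = u ⟨0, Nat.one_pos⟩ + 3 := by
    revert hu hv
    rw [IsBlack, IsWhite]
    revert u v
    have : ∀ x y : ZMod 4, Odd x.val → Even y.val → (y = x + 1 ∨ y = x + 3) := by decide
    intro u v hu hv
    exact this _ _ hu hv
  set x := u ⟨0, Nat.one_pos⟩ with hx
  rcases hd with hc | hc
  · -- v = x + 1 : go around the cycle downwards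
    let W : (BH 1).Walk (c1 x) (c1 (x + -1 + -1 + -1)) :=
      Walk.cons (adj1 x (Or.inr rfl)) (Walk.cons (adj1 (x + -1) (Or.inr rfl))
        (Walk.cons (adj1 (x + -1 + -1) (Or.inr rfl)) Walk.nil))
    have hend : c1 (x + -1 + -1 + -1) = v := by
      have h4 : x + -1 + -1 + -1 = x + 1 := by
        have : (-3 : ZMod 4) = 1 := by decide
        linear_combination this
      rw [h4, ← hc]
      exact (c1_eta v).symm
    refine ⟨W.copy (c1_eta u).symm hend, ?_⟩
    intro a
    rw [Walk.support_copy]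
    conv_lhs => rw [c1_eta a]
    have hsup : W.support = List.map c1 [x, x + -1, x + -1 + -1, x + -1 + -1 + -1] := rfl
    rw [hsup, List.count_map_of_injective _ _ c1_inj]
    exact count4a _ x
  · -- v = x + 3 : go around the cycle upwards
    let W : (BH 1).Walk (c1 x) (c1 (x + 1 + 1 + 1)) :=
      Walk.cons (adj1 x (Or.inl rfl)) (Walk.cons (adj1 (x + 1) (Or.inl rfl))
        (Walk.cons (adj1 (x + 1 + 1) (Or.inl rfl)) Walk.nil))
    have hend : c1 (x + 1 + 1 + 1) = v := by
      rw [(by ring : x + 1 + 1 + 1 = x + 3), ← hc]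
      exact (c1_eta v).symm
    refine ⟨W.copy (c1_eta u).symm hend, ?_⟩
    intro a
    rw [Walk.support_copy]
    conv_lhs => rw [c1_eta a]
    have hsup : W.support = List.map c1 [x, x + 1, x + 1 + 1, x + 1 + 1 + 1] := rfl
    rw [hsup, List.count_map_of_injective _ _ c1_inj]
    exact count4b _ x

/-! ### Main theorem -/

lemma lace : ∀ m : ℕ, ∀ hm : 0 < m, ∀ u v : BHV m, IsBlack hm u → IsWhite hm v →
    ∃ p : (BH m).Walk u v, p.IsHamiltonian := by
  intro m
  induction m with
  | zero => intro hm; exact absurd hm (by omega)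
  | succ k ih =>
    intro hm u v hu hv
    rcases Nat.eq_zero_or_pos k with rfl | hk
    · exact lace_base u v hu hv
    · exact lace_step k hk (fun a b ha hb => ih hk a b ha hb) u v hu hv

/-- `BH n` is Hamiltonian laceable for `n ≥ 1`. -/
theorem BH_hamiltonian_laceable (n : ℕ) (hn : 1 ≤ n) (u v : Fin n → ZMod 4)
    (hu : IsBlack (by omega) u) (hv : IsWhite (by omega) v) :
    ∃ p : (BH n).Walk u v, p.IsHamiltonian :=
  lace n (by omega) u v hu hv
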